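/- Let A be a Noetherian integral domain with fraction field K, R a finite type A-algebra that is a domain, and M a finitely generated R-module. Suppose there is a surjective (R ⊗_A K)-linear map M ⊗_A K → (R ⊗_A K)^{⊕ n}. Then there exists 0 ≠ g ∈ A such that, setting B = A[1/g], there is a surjective (R ⊗_A B)-linear map M ⊗_A B → (R ⊗_A B)^{⊕ n} whose base change to K recovers the original surjection. -/

import Mathlib

open LocalizedModule

lemma aux_pi_isLocalizedModule {R : Type*} [CommRing R] (S : Submonoid R) (n : ℕ) :
    IsLocalizedModule S
      (LinearMap.pi fun i : Fin n =>
        (Algebra.linearMap R (Localization S)).comp (LinearMap.proj i)) := by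
  constructor
  · intro s
    rw [Module.End.isUnit_iff]
    constructor
    · intro x y hxy
      ext i
      have h1 : s.1 • x i = s.1 • y i := congr_fun hxy i
      have := IsLocalization.map_units (Localization S) s
      rw [Algebra.smul_def, Algebra.smul_def] at h1
      exact this.mul_left_cancel h1
    · intro y
      refine ⟨fun i => (((IsLocalization.map_units (Localization S) s).unit⁻¹ : _) : Localization S) * y i, ?_⟩
      ext i
      have : s.1 • ((((IsLocalization.map_units (Localization S) s).unit⁻¹ : _) : Localization S) * y i)
          = y i := by
        rw [Algebra.smul_def, ← mul_assoc, IsUnit.mul_val_inv, one_mul]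
      exact this
  · intro y
    obtain ⟨b, hb⟩ := IsLocalization.exist_integer_multiples S Finset.univ y
    choose x hx using fun i => hb i (Finset.mem_univ i)
    refine ⟨⟨fun i => x i, b⟩, ?_⟩
    ext i
    simpa [Submonoid.smul_def, Algebra.smul_def] using (hx i).symm
  · intro x y hxy
    have h : ∀ i, ∃ c : S, c.1 * x i = c.1 * y i := fun i =>
      IsLocalization.exists_of_eq (M := S) (congr_fun hxy i)
    choose c hc using h
    refine ⟨∏ i, c i, ?_⟩
    ext i
    have : (∏ j, (c j).1) = (∏ j ∈ Finset.univ.erase i, (c j).1) * (c i).1 := by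
      rw [← Finset.prod_erase_mul _ _ (Finset.mem_univ i)]
    simp only [Submonoid.smul_def, Pi.smul_apply, smul_eq_mul, SubmonoidClass.coe_finset_prod]
    rw [this, mul_assoc, mul_assoc, hc i]

lemma aux_spread {R : Type*} [CommRing R] [IsNoetherianRing R]
    {M : Type*} [AddCommGroup M] [Module R M] [Module.Finite R M] {n : ℕ}
    (T : Submonoid R)
    (f : LocalizedModule T M →ₗ[Localization T] (Fin n → Localization T))
    (hf : Function.Surjective f) :
    ∃ s : T, ∀ (P : Submonoid R), (s : R) ∈ P → (hPT : P ≤ T) →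
      ∃ f' : LocalizedModule P M →ₗ[Localization P] (Fin n → Localization P),
        Function.Surjective f' ∧
        ∀ (m : M) (i : Fin n),
          IsLocalization.map (Localization T) (RingHom.id R) (M := P) (T := T)
            hPT
            (f' (LocalizedModule.mk m 1) i) = f (LocalizedModule.mk m 1) i := by
  classical
  haveI : Module.FinitePresentation R M := Module.finitePresentation_of_finite R M
  set RT := Localization T with hRT
  set mkM := LocalizedModule.mkLinearMap T M with hmkM
  set mkN : (Fin n → R) →ₗ[R] (Fin n → RT) :=
    LinearMap.pi fun i => (Algebra.linearMap R RT).comp (LinearMap.proj i) with hmkN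
  haveI : IsLocalizedModule T mkN := aux_pi_isLocalizedModule T n
  set F : LocalizedModule T M →ₗ[R] (Fin n → RT) := f.restrictScalars R with hF
  obtain ⟨⟨h, s⟩, hhs⟩ := IsLocalizedModule.surj T (IsLocalizedModule.map T mkM mkN) F
  have key : ∀ m : M, (s : R) • f (LocalizedModule.mk m 1)
      = fun i => algebraMap R RT (h m i) := by
    intro m
    have h1 := LinearMap.congr_fun hhs (LocalizedModule.mk m 1)
    have h2 : (LocalizedModule.mk m 1 : LocalizedModule T M) = mkM m := rfl
    rw [h2] at h1
    rw [IsLocalizedModule.map_apply] at h1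
    ext i
    simpa [Submonoid.smul_def, hF, hmkN, hmkM] using congr_fun h1 i
  have Hi : ∀ i : Fin n, ∃ (t c : T) (m0 : M),
      (c : R) • h m0 = (c : R) • (Pi.single i ((s : R) * (t : R)) : Fin n → R) := by
    intro i
    obtain ⟨xi, hxi⟩ := hf (Pi.single i 1)
    obtain ⟨⟨mi, ti⟩, hmi⟩ := IsLocalizedModule.surj T mkM xi
    have h3 : f (LocalizedModule.mk mi 1) = (ti : R) • (Pi.single i (1 : RT) : Fin n → RT) := by
      have : (LocalizedModule.mk mi 1 : LocalizedModule T M) = mkM mi := rfl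
      rw [this, ← hmi, Submonoid.smul_def, LinearMap.map_smul_of_tower, hxi]
    have h4 : mkN (h mi) = mkN (Pi.single i ((s : R) * (ti : R)) : _) := by
      have h5 : (fun j => algebraMap R RT (h mi j))
          = (s : R) • ((ti : R) • (Pi.single i (1 : RT) : Fin n → RT)) := by rw [← h3, key mi]
      ext j
      have h6 := congr_fun h5 j
      rcases eq_or_ne j i with rfl | hne
      · simpa [hmkN, Algebra.smul_def, Pi.single_apply, map_mul] using h6
      · simpa [hmkN, Algebra.smul_def, Pi.single_apply, hne] using h6
    obtain ⟨ci, hci⟩ := IsLocalizedModule.exists_of_eq (S := T) (f := mkN) h4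
    exact ⟨ti, ci, mi, by simpa [Submonoid.smul_def] using hci⟩
  choose t c mm hm using Hi
  refine ⟨s * ∏ i, (t i * c i), ?_⟩
  intro P hsP hPT
  have hcoe : ((s * ∏ i, (t i * c i) : T) : R)
      = (s : R) * ∏ i, ((t i : R) * (c i : R)) := by
    push_cast
    rfl
  set RP := Localization P with hRP
  set mkMP := LocalizedModule.mkLinearMap P M with hmkMP
  set mkNP : (Fin n → R) →ₗ[R] (Fin n → RP) :=
    LinearMap.pi fun i => (Algebra.linearMap R RP).comp (LinearMap.proj i) with hmkNP
  haveI : IsLocalizedModule P mkNP := aux_pi_isLocalizedModule P n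
  have hsSu : IsUnit (algebraMap R RP ((s * ∏ i, (t i * c i) : T) : R)) :=
    IsLocalization.map_units RP ⟨_, hsP⟩
  have us : IsUnit (algebraMap R RP (s : R)) := by
    refine isUnit_of_dvd_unit (map_dvd _ ⟨∏ i, ((t i : R) * (c i : R)), hcoe⟩) hsSu
  have ui : ∀ i : Fin n, IsUnit (algebraMap R RP ((c i : R) * ((s : R) * (t i : R)))) := by
    intro i
    refine isUnit_of_dvd_unit (map_dvd _ ?_) hsSu
    refine ⟨∏ j ∈ Finset.univ.erase i, ((t j : R) * (c j : R)), ?_⟩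
    rw [hcoe, ← Finset.mul_prod_erase _ _ (Finset.mem_univ i)]
    ring
  set hP : LocalizedModule P M →ₗ[RP] (Fin n → RP) :=
    IsLocalizedModule.mapExtendScalars P mkMP mkNP RP h with hhP
  set f' : LocalizedModule P M →ₗ[RP] (Fin n → RP) :=
    (((us.unit⁻¹ : RPˣ) : RP)) • hP with hf'
  have hPapp : ∀ m0 : M, hP (LocalizedModule.mk m0 1) = mkNP (h m0) := by
    intro m0
    have : (LocalizedModule.mk m0 1 : LocalizedModule P M) = mkMP m0 := rfl
    rw [this, hhP]
    exact IsLocalizedModule.map_apply P mkMP mkNP h m0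
  refine ⟨f', ?_, ?_⟩
  · rw [← LinearMap.range_eq_top, ← top_le_iff, ← (Pi.basisFun RP (Fin n)).span_eq,
      Submodule.span_le]
    rintro _ ⟨i, rfl⟩
    have hx : hP (LocalizedModule.mk ((c i : R) • mm i) 1)
        = algebraMap R RP ((c i : R) * ((s : R) * (t i : R)))
            • (Pi.single i (1 : RP) : Fin n → RP) := by
      rw [hPapp]
      have h7 : h ((c i : R) • mm i)
          = (Pi.single i ((c i : R) * ((s : R) * (t i : R))) : Fin n → R) := by
        rw [map_smul, hm i]
        ext j
        rcases eq_or_ne j i with rfl | hne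
        · simp [Pi.single_apply]
        · simp [Pi.single_apply, hne]
      rw [h7]
      ext j
      rcases eq_or_ne j i with rfl | hne
      · simp [hmkNP, Algebra.smul_def, Pi.single_apply]
      · simp [hmkNP, Algebra.smul_def, Pi.single_apply, hne]
    refine ⟨(((ui i).unit⁻¹ : RPˣ) : RP) • (((us.unit : RPˣ) : RP)
      • (LocalizedModule.mk ((c i : R) • mm i) 1 : LocalizedModule P M)), ?_⟩
    have hbas : (Pi.basisFun RP (Fin n)) i = (Pi.single i (1 : RP) : Fin n → RP) := by
      ext j; simp [Pi.basisFun_apply]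
    rw [map_smul, map_smul, hf', LinearMap.smul_apply, hx, smul_smul, smul_smul, smul_smul,
      hbas]
    have hone : (((((ui i).unit⁻¹ : RPˣ) : RP) * ((us.unit : RPˣ) : RP))
        * (((us.unit⁻¹ : RPˣ) : RP)))
        * algebraMap R RP ((c i : R) * ((s : R) * (t i : R))) = 1 := by
      rw [mul_assoc ((((ui i).unit⁻¹ : RPˣ) : RP)), Units.mul_inv, mul_one]
      exact IsUnit.val_inv_mul (ui i)
    rw [hone, one_smul]
  · intro m i
    have husT : IsUnit (algebraMap R RT (s : R)) := IsLocalization.map_units RT s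
    apply husT.mul_left_cancel
    have hfm : f' (LocalizedModule.mk m 1) i
        = (((us.unit⁻¹ : RPˣ) : RP)) * algebraMap R RP (h m i) := by
      rw [hf', LinearMap.smul_apply, hPapp]
      simp [hmkNP]
    have hkey := congr_fun (key m) i
    rw [Pi.smul_apply, Algebra.smul_def] at hkey
    rw [hkey, hfm, map_mul]
    have h8 : IsLocalization.map (S := RP) (Localization T) (RingHom.id R) (M := P) (T := T)
        hPT (((us.unit⁻¹ : RPˣ) : RP)) * algebraMap R RT (s : R) = 1 := by
      have h9 : IsLocalization.map (S := RP) (Localization T) (RingHom.id R) (M := P) (T := T)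
          hPT (((us.unit : RPˣ) : RP)) = algebraMap R RT (s : R) := by
        rw [IsUnit.unit_spec]
        exact IsLocalization.map_eq _ _
      rw [← h9, ← map_mul, Units.inv_mul, map_one]
    rw [show IsLocalization.map (S := RP) (Localization T) (RingHom.id R) (M := P) (T := T)
        hPT (algebraMap R RP (h m i)) = algebraMap R RT (RingHom.id R (h m i)) from
        IsLocalization.map_eq _ _]
    calc algebraMap R RT (s : R)
        * (IsLocalization.map (S := RP) (Localization T) (RingHom.id R) (M := P) (T := T)
            hPT (((us.unit⁻¹ : RPˣ) : RP))
          * algebraMap R RT (RingHom.id R (h m i)))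
        = (IsLocalization.map (S := RP) (Localization T) (RingHom.id R) (M := P) (T := T)
            hPT (((us.unit⁻¹ : RPˣ) : RP)) * algebraMap R RT (s : R))
          * algebraMap R RT (RingHom.id R (h m i)) := by ring
      _ = algebraMap R RT (h m i) := by rw [h8, one_mul]; rfl



/-- Let `A` be a Noetherian domain with fraction field `K`, `R` a finite type
`A`-algebra which is a domain, and `M` a finitely generated `R`-module.  A surjection
`M ⊗_A K → (R ⊗_A K)^n` over the generic fiber `R ⊗_A K` (realized as the localization of
`R`, resp. of `M`, at the image `T` of `A ∖ {0}`) spreads out: there is `0 ≠ g ∈ A` such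
that, over `B = A[1/g]` (realized as the localization at the image of the powers of `g`),
there is a surjection `M ⊗_A B → (R ⊗_A B)^n` whose base change to `K` recovers the
original surjection. -/
theorem spread_out_surjection_from_generic_fiber
    (A : Type*) [CommRing A] [IsDomain A] [IsNoetherianRing A]
    (R : Type*) [CommRing R] [IsDomain R] [Algebra A R] [Algebra.FiniteType A R]
    (M : Type*) [AddCommGroup M] [Module R M] [Module.Finite R M] (n : ℕ)
    (f : LocalizedModule (Submonoid.map (algebraMap A R) (nonZeroDivisors A)) M
      →ₗ[Localization (Submonoid.map (algebraMap A R) (nonZeroDivisors A))]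
        (Fin n → Localization (Submonoid.map (algebraMap A R) (nonZeroDivisors A))))
    (hf : Function.Surjective f) :
    ∃ (g : A) (hg : g ≠ 0),
      ∃ f' : LocalizedModule (Submonoid.map (algebraMap A R) (Submonoid.powers g)) M
        →ₗ[Localization (Submonoid.map (algebraMap A R) (Submonoid.powers g))]
          (Fin n → Localization (Submonoid.map (algebraMap A R) (Submonoid.powers g))),
        Function.Surjective f' ∧
        ∀ (m : M) (i : Fin n),
          IsLocalization.map
            (M := Submonoid.map (algebraMap A R) (Submonoid.powers g))
            (T := Submonoid.map (algebraMap A R) (nonZeroDivisors A))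
            (Localization (Submonoid.map (algebraMap A R) (nonZeroDivisors A)))
            (RingHom.id R)
            (by
              rintro x ⟨a, ha, rfl⟩
              obtain ⟨k, rfl⟩ := ha
              exact ⟨g ^ k,
                pow_mem (mem_nonZeroDivisors_of_ne_zero hg) k, rfl⟩)
            (f' (LocalizedModule.mk m 1) i) =
          f (LocalizedModule.mk m 1) i := by
  haveI : IsNoetherianRing R := Algebra.FiniteType.isNoetherianRing A R
  obtain ⟨s, hs⟩ := aux_spread (Submonoid.map (algebraMap A R) (nonZeroDivisors A)) f hf
  obtain ⟨a, ha, has⟩ := s.2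
  have hane : a ≠ 0 := nonZeroDivisors.ne_zero ha
  have hmem : (s : R) ∈ Submonoid.map (algebraMap A R) (Submonoid.powers a) :=
    ⟨a, ⟨1, pow_one a⟩, has⟩
  have hle : Submonoid.map (algebraMap A R) (Submonoid.powers a)
      ≤ Submonoid.map (algebraMap A R) (nonZeroDivisors A) := by
    rintro x ⟨b, ⟨k, rfl⟩, rfl⟩
    exact ⟨a ^ k, pow_mem ha k, rfl⟩
  obtain ⟨f', hsurj, hcomp⟩ := hs _ hmem hle
  exact ⟨a, hane, f', hsurj, fun m i => hcomp m i⟩
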